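/- In a morphic triple (V, W, β), dim W ≥ dim V − 1. -/

import Mathlib

open Module

variable {p : ℕ}

/-- The "derived" subspace `[U₁, U₂]`: the span of the values `β x y` for
`x ∈ U₁`, `y ∈ U₂`. -/
def pairSpan {V W : Type*} [AddCommGroup V] [Module (ZMod p) V]
    [AddCommGroup W] [Module (ZMod p) W]
    (β : V →ₗ[ZMod p] V →ₗ[ZMod p] W) (U₁ U₂ : Submodule (ZMod p) V) :
    Submodule (ZMod p) W :=
  Submodule.span (ZMod p) {w | ∃ x ∈ U₁, ∃ y ∈ U₂, β x y = w}

/-- `U' = [U, U]`. -/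
def der {V W : Type*} [AddCommGroup V] [Module (ZMod p) V]
    [AddCommGroup W] [Module (ZMod p) W]
    (β : V →ₗ[ZMod p] V →ₗ[ZMod p] W) (U : Submodule (ZMod p) V) :
    Submodule (ZMod p) W :=
  pairSpan β U U

/-- `(V, W, β)` is a morphic triple if `β` is alternating, `V' = W`, `U'` is a maximal
subspace of `W` for every maximal subspace `U` of `V`, and the intersection of all
such `U'` is zero. -/
def IsMorphicTriple {V W : Type*} [AddCommGroup V] [Module (ZMod p) V]
    [AddCommGroup W] [Module (ZMod p) W]
    (β : V →ₗ[ZMod p] V →ₗ[ZMod p] W) : Prop :=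
  (∀ v : V, β v v = 0) ∧
  der β ⊤ = ⊤ ∧
  (∀ U : Submodule (ZMod p) V, IsCoatom U → IsCoatom (der β U)) ∧
  (⨅ (U : Submodule (ZMod p) V) (_ : IsCoatom U), der β U) = ⊥

section AuxHelpers

set_option linter.unusedSectionVars false

variable [Fact p.Prime]
variable {X : Type*} [AddCommGroup X] [Module (ZMod p) X] [FiniteDimensional (ZMod p) X]

/-- Every coatom is the kernel of a linear functional. -/
lemma aux_exists_ker_eq {U : Submodule (ZMod p) X} (hU : IsCoatom U) :
    ∃ f : X →ₗ[ZMod p] ZMod p, LinearMap.ker f = U := by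
  have hs : IsSimpleModule (ZMod p) (X ⧸ U) := isSimpleModule_iff_isCoatom.mpr hU
  have h1 : finrank (ZMod p) (X ⧸ U) = 1 := isSimpleModule_iff_finrank_eq_one.mp hs
  have e : (X ⧸ U) ≃ₗ[ZMod p] ZMod p :=
    LinearEquiv.ofFinrankEq _ _ (by rw [h1, finrank_self])
  refine ⟨e.toLinearMap ∘ₗ U.mkQ, ?_⟩
  rw [LinearMap.ker_comp, LinearEquiv.ker, Submodule.comap_bot, Submodule.ker_mkQ]

/-- The kernel of a nonzero functional is a coatom. -/
lemma aux_isCoatom_ker {f : X →ₗ[ZMod p] ZMod p} (hf : f ≠ 0) :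
    IsCoatom (LinearMap.ker f) := by
  haveI : IsSimpleModule (ZMod p) (ZMod p) :=
    isSimpleModule_iff_finrank_eq_one.mpr (finrank_self _)
  refine LinearMap.isCoatom_ker_of_surjective ?_
  rw [← LinearMap.range_eq_top]
  rcases eq_bot_or_eq_top (LinearMap.range f) with h | h
  · exact absurd (LinearMap.range_eq_bot.mp h) hf
  · exact h

/-- A functional whose kernel is a coatom is nonzero. -/
lemma aux_ker_ne_top {f : X →ₗ[ZMod p] ZMod p} {U : Submodule (ZMod p) X}
    (hU : IsCoatom U) (hk : LinearMap.ker f = U) : f ≠ 0 := by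
  intro h0
  rw [h0, LinearMap.ker_zero] at hk
  exact hU.1 hk.symm

/-- Two functionals with the same kernel are proportional. -/
lemma aux_prop {f g : X →ₗ[ZMod p] ZMod p} (hf : f ≠ 0)
    (h : LinearMap.ker g = LinearMap.ker f) : ∃ c : ZMod p, c ≠ 0 ∧ g = c • f := by
  obtain ⟨v, hv⟩ : ∃ v, f v ≠ 0 := by
    by_contra hc
    push_neg at hc
    exact hf (LinearMap.ext fun x => by simp [hc x])
  have hgv : g v ≠ 0 := by
    intro h0
    have : v ∈ LinearMap.ker g := h0
    rw [h] at this
    exact hv this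
  refine ⟨(f v)⁻¹ * g v, by simp [inv_ne_zero hv, hgv], ?_⟩
  ext x
  have hmem : x - (f x * (f v)⁻¹) • v ∈ LinearMap.ker f := by
    simp only [LinearMap.mem_ker, map_sub, map_smul, smul_eq_mul]
    field_simp
    simp
  rw [← h] at hmem
  have h0 : g x - (f x * (f v)⁻¹) * g v = 0 := by
    simpa [map_sub, map_smul, smul_eq_mul] using hmem
  have : g x = (f x * (f v)⁻¹) * g v := by linear_combination h0
  simp only [LinearMap.smul_apply, smul_eq_mul]
  rw [this]; ring

/-- The number of nonzero functionals on `Y` is `p ^ dim Y - 1`. -/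
lemma aux_card_nonzero_dual {Y : Type*} [AddCommGroup Y] [Module (ZMod p) Y]
    [FiniteDimensional (ZMod p) Y] :
    Nat.card {g : Y →ₗ[ZMod p] ZMod p // g ≠ 0} = p ^ finrank (ZMod p) Y - 1 := by
  classical
  haveI : Finite Y := Module.finite_of_finite (ZMod p)
  haveI : Finite (Y →ₗ[ZMod p] ZMod p) :=
    Finite.of_injective (fun f => (f : Y → ZMod p)) DFunLike.coe_injective
  letI : Fintype (Y →ₗ[ZMod p] ZMod p) := Fintype.ofFinite _
  rw [Nat.card_eq_fintype_card]
  have h1 : Fintype.card {g : Y →ₗ[ZMod p] ZMod p // ¬ (g = 0)} =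
      Fintype.card (Y →ₗ[ZMod p] ZMod p) - Fintype.card {g : Y →ₗ[ZMod p] ZMod p // g = 0} :=
    Fintype.card_subtype_compl _
  have h2 : Fintype.card {g : Y →ₗ[ZMod p] ZMod p // g = 0} = 1 := Fintype.card_subtype_eq 0
  have h3 : Fintype.card (Y →ₗ[ZMod p] ZMod p) = p ^ finrank (ZMod p) Y := by
    have := card_eq_pow_finrank (K := ZMod p) (V := Module.Dual (ZMod p) Y)
    rw [ZMod.card, Subspace.dual_finrank_eq] at this
    exact this
  calc Fintype.card {g : Y →ₗ[ZMod p] ZMod p // g ≠ 0}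
      = Fintype.card {g : Y →ₗ[ZMod p] ZMod p // ¬ (g = 0)} := rfl
    _ = p ^ finrank (ZMod p) Y - 1 := by rw [h1, h2, h3]

/-- The exact count of coatoms of `X`. -/
lemma aux_coatom_count :
    Nat.card {U : Submodule (ZMod p) X // IsCoatom U} * (p - 1)
      = p ^ finrank (ZMod p) X - 1 := by
  classical
  have hF : ∀ U : {U : Submodule (ZMod p) X // IsCoatom U},
      ∃ f : X →ₗ[ZMod p] ZMod p, LinearMap.ker f = U.1 := fun U => aux_exists_ker_eq U.2
  choose F hFker using hF
  have hFne : ∀ U, F U ≠ 0 := fun U => aux_ker_ne_top U.2 (hFker U)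
  have hbij : Function.Bijective
      (fun x : {U : Submodule (ZMod p) X // IsCoatom U} × (ZMod p)ˣ =>
        (⟨(x.2 : ZMod p) • F x.1, by
          intro h0
          rcases smul_eq_zero.mp h0 with h | h
          · exact x.2.ne_zero h
          · exact hFne x.1 h⟩ : {g : X →ₗ[ZMod p] ZMod p // g ≠ 0})) := by
    constructor
    · rintro ⟨U, c⟩ ⟨U', c'⟩ h
      have h' : (c : ZMod p) • F U = (c' : ZMod p) • F U' := congrArg Subtype.val h
      have hker : U.1 = U'.1 := by
        rw [← hFker U, ← hFker U', ← LinearMap.ker_smul (F U) (c : ZMod p) c.ne_zero,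
          ← LinearMap.ker_smul (F U') (c' : ZMod p) c'.ne_zero, h']
      have hUU : U = U' := Subtype.ext hker
      subst hUU
      obtain ⟨v, hv⟩ : ∃ v, F U v ≠ 0 := by
        by_contra hc; push_neg at hc
        exact hFne U (LinearMap.ext fun x => by simp [hc x])
      have heq : (c : ZMod p) * F U v = (c' : ZMod p) * F U v := by
        have := congrArg (fun g => g v) h'
        simpa using this
      have : (c : ZMod p) = (c' : ZMod p) := mul_right_cancel₀ hv heq
      simp [Prod.ext_iff, Units.ext_iff, this]
    · rintro ⟨g, hg⟩
      have hco : IsCoatom (LinearMap.ker g) := aux_isCoatom_ker hg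
      set U : {U : Submodule (ZMod p) X // IsCoatom U} := ⟨LinearMap.ker g, hco⟩
      obtain ⟨c, hc, hgc⟩ := aux_prop (f := F U) (g := g) (hFne U) (by rw [hFker U])
      exact ⟨(U, Units.mk0 c hc), by simp [hgc.symm]⟩
  have hcard := Nat.card_eq_of_bijective _ hbij
  rw [Nat.card_prod] at hcard
  rw [Nat.card_eq_fintype_card (α := (ZMod p)ˣ), ZMod.card_units] at hcard
  rw [hcard, aux_card_nonzero_dual]

/-- A family of coatoms all containing `R` has at most
`(p ^ dim (X/R) - 1)/(p-1)` elements. -/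
lemma aux_count_le (R : Submodule (ZMod p) X) (S : Finset (Submodule (ZMod p) X))
    (hco : ∀ U ∈ S, IsCoatom U) (hR : ∀ U ∈ S, R ≤ U) :
    S.card * (p - 1) ≤ p ^ finrank (ZMod p) (X ⧸ R) - 1 := by
  classical
  haveI : Finite X := Module.finite_of_finite (ZMod p)
  haveI : Finite (X ⧸ R) := Quotient.finite _
  haveI : Finite ((X ⧸ R) →ₗ[ZMod p] ZMod p) :=
    Finite.of_injective (fun f => (f : (X ⧸ R) → ZMod p)) DFunLike.coe_injective
  have hF : ∀ U : ↥S, ∃ f : X →ₗ[ZMod p] ZMod p, LinearMap.ker f = U.1 :=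
    fun U => aux_exists_ker_eq (hco U.1 U.2)
  choose F hFker using hF
  have hFne : ∀ U, F U ≠ 0 := fun U => aux_ker_ne_top (hco U.1 U.2) (hFker U)
  have hRle : ∀ U : ↥S, R ≤ LinearMap.ker (F U) := fun U => (hFker U) ▸ hR U.1 U.2
  set Φ : ↥S × (ZMod p)ˣ → {g : (X ⧸ R) →ₗ[ZMod p] ZMod p // g ≠ 0} :=
    fun x => ⟨(x.2 : ZMod p) • R.liftQ (F x.1) (hRle x.1), by
      intro h0
      rcases smul_eq_zero.mp h0 with h | h
      · exact x.2.ne_zero h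
      · apply hFne x.1
        have := congrArg (fun g => g.comp R.mkQ) h
        simpa [Submodule.liftQ_mkQ] using this⟩ with hΦ
  have hinj : Function.Injective Φ := by
    rintro ⟨U, c⟩ ⟨U', c'⟩ h
    have h' : (c : ZMod p) • R.liftQ (F U) (hRle U)
        = (c' : ZMod p) • R.liftQ (F U') (hRle U') := congrArg Subtype.val h
    have h'' : (c : ZMod p) • F U = (c' : ZMod p) • F U' := by
      have := congrArg (fun g => g.comp R.mkQ) h'
      simpa [LinearMap.smul_comp, Submodule.liftQ_mkQ] using this
    have hker : U.1 = U'.1 := by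
      rw [← hFker U, ← hFker U', ← LinearMap.ker_smul (F U) (c : ZMod p) c.ne_zero,
        ← LinearMap.ker_smul (F U') (c' : ZMod p) c'.ne_zero, h'']
    have hUU : U = U' := Subtype.ext hker
    subst hUU
    obtain ⟨v, hv⟩ : ∃ v, F U v ≠ 0 := by
      by_contra hc; push_neg at hc
      exact hFne U (LinearMap.ext fun x => by simp [hc x])
    have heq : (c : ZMod p) * F U v = (c' : ZMod p) * F U v := by
      have := congrArg (fun g => g v) h''
      simpa using this
    have : (c : ZMod p) = (c' : ZMod p) := mul_right_cancel₀ hv heq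
    simp [Prod.ext_iff, Units.ext_iff, this]
  have hle := Nat.card_le_card_of_injective Φ hinj
  rw [Nat.card_prod, Nat.card_eq_fintype_card (α := (ZMod p)ˣ), ZMod.card_units,
    Nat.card_eq_fintype_card (α := ↥S), Fintype.card_coe, aux_card_nonzero_dual] at hle
  exact hle

end AuxHelpers

/-- In a morphic triple `(V, W, β)`, we have `dim W ≥ dim V - 1`. -/
theorem finrank_W_ge [Fact p.Prime]
    {V W : Type*} [AddCommGroup V] [Module (ZMod p) V] [FiniteDimensional (ZMod p) V]
    [AddCommGroup W] [Module (ZMod p) W] [FiniteDimensional (ZMod p) W]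
    (β : V →ₗ[ZMod p] V →ₗ[ZMod p] W) (hβ : IsMorphicTriple β) :
    Module.finrank (ZMod p) W ≥ Module.finrank (ZMod p) V - 1 := by
  classical
  obtain ⟨halt, htop, hcoat, -⟩ := hβ
  have hp : 1 < p := (Fact.out : p.Prime).one_lt
  set n := finrank (ZMod p) V with hn
  set m := finrank (ZMod p) W with hm
  suffices h : n ≤ m + 1 by omega
  -- skew-symmetry
  have hskew : ∀ x y : V, β x y = - β y x := by
    intro x y
    have h0 := halt (x + y)
    simp only [map_add, LinearMap.add_apply, halt x, halt y, zero_add, add_zero] at h0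
    exact eq_neg_of_add_eq_zero_right h0
  have hder : ∀ (U : Submodule (ZMod p) V), ∀ x ∈ U, ∀ y ∈ U, β x y ∈ der β U :=
    fun U x hx y hy => Submodule.subset_span ⟨x, hx, y, hy, rfl⟩
  haveI : Finite V := Module.finite_of_finite (ZMod p)
  haveI : Finite W := Module.finite_of_finite (ZMod p)
  haveI : Finite (Submodule (ZMod p) V) :=
    Finite.of_injective (fun U : Submodule (ZMod p) V => (U : Set V)) SetLike.coe_injective
  haveI : Finite (Submodule (ZMod p) W) :=
    Finite.of_injective (fun U : Submodule (ZMod p) W => (U : Set W)) SetLike.coe_injective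
  letI : Fintype (Submodule (ZMod p) V) := Fintype.ofFinite _
  letI : Fintype (Submodule (ZMod p) W) := Fintype.ofFinite _
  set SV := Finset.univ.filter (fun U : Submodule (ZMod p) V => IsCoatom U) with hSV
  set SW := Finset.univ.filter (fun M : Submodule (ZMod p) W => IsCoatom M) with hSW
  have hSVcard : SV.card * (p - 1) = p ^ n - 1 := by
    rw [← aux_coatom_count (X := V)]
    congr 1
    rw [Nat.card_eq_fintype_card, Fintype.card_subtype]
  have hSWcard : SW.card * (p - 1) = p ^ m - 1 := by
    rw [← aux_coatom_count (X := W)]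
    congr 1
    rw [Nat.card_eq_fintype_card, Fintype.card_subtype]
  -- the fiber bound
  have hfiber : ∀ M ∈ SW, (SV.filter (fun U => der β U = M)).card ≤ p + 1 := by
    intro M hM
    have hMco : IsCoatom M := (Finset.mem_filter.mp hM).2
    set T := SV.filter (fun U => der β U = M) with hT
    by_cases hcard : T.card ≤ 1
    · exact hcard.trans (by omega)
    · push_neg at hcard
      have hmemT : ∀ U ∈ T, IsCoatom U ∧ der β U = M := by
        intro U hU
        have h1 := Finset.mem_filter.mp hU
        exact ⟨(Finset.mem_filter.mp h1.1).2, h1.2⟩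
      have hval : ∀ U ∈ T, ∀ x ∈ U, ∀ y ∈ U, β x y ∈ M := by
        intro U hU x hx y hy
        rw [← (hmemT U hU).2]
        exact hder U x hx y hy
      obtain ⟨U₁, hU₁T, U₂, hU₂T, hne⟩ := Finset.one_lt_card.mp hcard
      have hco₁ := (hmemT U₁ hU₁T).1
      have hco₂ := (hmemT U₂ hU₂T).1
      have hsup : U₁ ⊔ U₂ = ⊤ := by
        refine hco₁.2 _ (lt_of_le_of_ne le_sup_left fun he => ?_)
        have h21 : U₂ ≤ U₁ := he ▸ le_sup_right
        rcases lt_or_eq_of_le h21 with hlt | heq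
        · exact hco₁.1 (hco₂.2 _ hlt)
        · exact hne heq.symm
      set R := U₁ ⊓ U₂ with hR
      have hrad : ∀ r ∈ R, ∀ v : V, β r v ∈ M := by
        intro r hr v
        have hv : v ∈ U₁ ⊔ U₂ := by rw [hsup]; exact Submodule.mem_top
        obtain ⟨x₁, hx₁, x₂, hx₂, rfl⟩ := Submodule.mem_sup.mp hv
        rw [map_add]
        exact M.add_mem (hval U₁ hU₁T r (Submodule.mem_inf.mp hr).1 x₁ hx₁)
          (hval U₂ hU₂T r (Submodule.mem_inf.mp hr).2 x₂ hx₂)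
      have hRle : ∀ U ∈ T, R ≤ U := by
        intro U hU
        by_contra hnle
        have hUco := (hmemT U hU).1
        have hsupU : U ⊔ R = ⊤ := by
          refine hUco.2 _ (lt_of_le_of_ne le_sup_left fun he => ?_)
          exact hnle (he ▸ le_sup_right)
        have hall : ∀ x y : V, β x y ∈ M := by
          intro x y
          have hx : x ∈ U ⊔ R := by rw [hsupU]; exact Submodule.mem_top
          have hy : y ∈ U ⊔ R := by rw [hsupU]; exact Submodule.mem_top
          obtain ⟨u, hu, r, hr, rfl⟩ := Submodule.mem_sup.mp hx
          obtain ⟨u', hu', r', hr', rfl⟩ := Submodule.mem_sup.mp hy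
          have e1 : β (u + r) (u' + r') = β u u' + β u r' + (β r u' + β r r') := by
            simp only [map_add, LinearMap.add_apply]
            abel
          rw [e1]
          refine M.add_mem (M.add_mem (hval U hU u hu u' hu') ?_)
            (M.add_mem (hrad r hr u') (hrad r hr r'))
          rw [hskew u r']
          exact M.neg_mem (hrad r' hr' u)
        have hle : der β (⊤ : Submodule (ZMod p) V) ≤ M := by
          refine Submodule.span_le.mpr ?_
          rintro w ⟨x, -, y, -, rfl⟩
          exact hall x y
        rw [htop] at hle
        exact hMco.1 (top_le_iff.mp hle)
      -- dimension bound on `V ⧸ R`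
      obtain ⟨f₁, hf₁⟩ := aux_exists_ker_eq hco₁
      obtain ⟨f₂, hf₂⟩ := aux_exists_ker_eq hco₂
      have hkerg : LinearMap.ker (f₁.prod f₂) = R := by
        rw [LinearMap.ker_prod, hf₁, hf₂]
      have hfr : finrank (ZMod p) (V ⧸ R) ≤ 2 := by
        rw [← hkerg]
        rw [(LinearMap.quotKerEquivRange (f₁.prod f₂)).finrank_eq]
        refine (Submodule.finrank_le _).trans ?_
        rw [Module.finrank_prod, finrank_self]
      have hTb := aux_count_le R T (fun U hU => (hmemT U hU).1) hRle
      have hpow : p ^ finrank (ZMod p) (V ⧸ R) ≤ p ^ 2 :=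
        Nat.pow_le_pow_right (by omega) hfr
      have hsq : p ^ 2 - 1 = (p + 1) * (p - 1) := by
        obtain ⟨q, rfl⟩ : ∃ q, p = q + 2 := ⟨p - 2, by omega⟩
        have h5 : q + 2 - 1 = q + 1 := rfl
        rw [h5]
        have h6 : (q + 2) ^ 2 = (q + 2 + 1) * (q + 1) + 1 := by ring
        omega
      have hfin : T.card * (p - 1) ≤ (p + 1) * (p - 1) := by
        rw [← hsq]
        exact hTb.trans (Nat.sub_le_sub_right hpow 1)
      exact Nat.le_of_mul_le_mul_right hfin (by omega)
  -- pigeonhole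
  have hmaps : ∀ U ∈ SV, der β U ∈ SW := by
    intro U hU
    rw [hSW, Finset.mem_filter]
    exact ⟨Finset.mem_univ _, hcoat U (Finset.mem_filter.mp hU).2⟩
  have hpig : SV.card ≤ (p + 1) * SW.card :=
    Finset.card_le_mul_card_image_of_maps_to hmaps (p + 1) hfiber
  -- arithmetic conclusion
  have hchain : p ^ n - 1 ≤ (p + 1) * (p ^ m - 1) := by
    calc p ^ n - 1 = SV.card * (p - 1) := hSVcard.symm
      _ ≤ ((p + 1) * SW.card) * (p - 1) := Nat.mul_le_mul_right _ hpig
      _ = (p + 1) * (SW.card * (p - 1)) := by ring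
      _ = (p + 1) * (p ^ m - 1) := by rw [hSWcard]
  have hpn : 0 < p ^ n := Nat.pow_pos (by omega)
  have hpm : 0 < p ^ m := Nat.pow_pos (by omega)
  have hlt : p ^ n < p ^ (m + 2) := by
    have h1 : p ^ n ≤ (p + 1) * (p ^ m - 1) + 1 := by omega
    have h2 : (p + 1) * (p ^ m - 1) + 1 ≤ (p + 1) * p ^ m := by
      calc (p + 1) * (p ^ m - 1) + 1 ≤ (p + 1) * (p ^ m - 1) + (p + 1) := by omega
        _ = (p + 1) * ((p ^ m - 1) + 1) := by ring
        _ = (p + 1) * p ^ m := by rw [Nat.sub_add_cancel hpm]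
    have hlt2 : p + 1 < p ^ 2 := by nlinarith
    have h3 : (p + 1) * p ^ m < p ^ 2 * p ^ m := (Nat.mul_lt_mul_right hpm).mpr hlt2
    have h4 : p ^ 2 * p ^ m = p ^ (m + 2) := by
      rw [← pow_add, Nat.add_comm]
    omega
  have := (Nat.pow_lt_pow_iff_right hp).mp hlt
  omega
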